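/- arXiv:2404.03900 — 5 statements merged into one kernel-verified Lean document; each statement's English description precedes it below -/
import Mathlib

section
/- Let β > 0, M ≥ 2, and let ξ_1, …, ξ_M ∈ ℝ^d be memory patterns with m = max_{ν} ‖ξ_ν‖. Let 𝓜 ⊆ {1, …, M} be a support set of size k, let μ ∈ 𝓜, and let x ∈ ℝ^d be any query. Then ‖T_Sparse(x) − ξ_μ‖ ≤ m (M + k − 2) exp(−β Δ̃_μ(x)), where Δ̃_μ(x) = ⟨x, ξ_μ⟩ − max_{ν≠μ} ⟨x, ξ_ν⟩. -/
open scoped RealInnerProductSpace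

set_option maxHeartbeats 1000000 in
/-- sparsity-dependent retrieval error bound for the sparse-structured
modern Hopfield model:
`‖T_Sparse(x) − ξ_μ‖ ≤ m (M + k − 2) exp(−β Δ̃_μ(x))`. -/
theorem sparse_retrieval_error_bound
    {d M : ℕ} (hM : 2 ≤ M) (β : ℝ) (hβ : 0 < β)
    (ξ : Fin M → EuclideanSpace ℝ (Fin d))
    (m : ℝ) (hm : IsGreatest (Set.range fun ν => ‖ξ ν‖) m)
    (𝓜 : Finset (Fin M)) (k : ℕ) (hk : 𝓜.card = k)
    (μ : Fin M) (hμ : μ ∈ 𝓜)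
    (x : EuclideanSpace ℝ (Fin d))
    (maxOther : ℝ)
    (hmax : IsGreatest {r : ℝ | ∃ ν : Fin M, ν ≠ μ ∧ r = ⟪x, ξ ν⟫} maxOther) :
    ‖(∑ ν ∈ 𝓜,
        (Real.exp (β * ⟪x, ξ ν⟫) / ∑ lam : Fin M, Real.exp (β * ⟪x, ξ lam⟫)) • ξ ν)
      - ξ μ‖
      ≤ m * ((M : ℝ) + (k : ℝ) - 2) * Real.exp (-β * (⟪x, ξ μ⟫ - maxOther)) := by
  obtain ⟨hm_mem, hm_ub⟩ := hm
  have hmν : ∀ ν : Fin M, ‖ξ ν‖ ≤ m := fun ν => hm_ub ⟨ν, rfl⟩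
  have hm0 : 0 ≤ m := le_trans (norm_nonneg (ξ μ)) (hmν μ)
  set Z : ℝ := ∑ lam : Fin M, Real.exp (β * ⟪x, ξ lam⟫) with hZdef
  have hZpos : 0 < Z :=
    Finset.sum_pos (fun i _ => Real.exp_pos _) ⟨μ, Finset.mem_univ μ⟩
  set e : ℝ := Real.exp (-β * (⟪x, ξ μ⟫ - maxOther)) with hedef
  have hepos : 0 < e := Real.exp_pos _
  have hZgeμ : Real.exp (β * ⟪x, ξ μ⟫) ≤ Z :=
    Finset.single_le_sum (f := fun lam => Real.exp (β * ⟪x, ξ lam⟫)) (fun i _ => (Real.exp_pos _).le) (Finset.mem_univ μ)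
  have hratio : Real.exp (β * maxOther) / Z ≤ e := by
    have h1 : Real.exp (β * maxOther) / Z
        ≤ Real.exp (β * maxOther) / Real.exp (β * ⟪x, ξ μ⟫) :=
      div_le_div_of_nonneg_left (Real.exp_pos _).le (Real.exp_pos _) hZgeμ
    have h2 : Real.exp (β * maxOther) / Real.exp (β * ⟪x, ξ μ⟫) = e := by
      rw [hedef, ← Real.exp_sub]; ring_nf
    linarith
  have hp_other : ∀ ν : Fin M, ν ≠ μ → Real.exp (β * ⟪x, ξ ν⟫) / Z ≤ e := by
    intro ν hν
    have h1 : Real.exp (β * ⟪x, ξ ν⟫) ≤ Real.exp (β * maxOther) :=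
      Real.exp_le_exp.2 (mul_le_mul_of_nonneg_left (hmax.2 ⟨ν, hν, rfl⟩) hβ.le)
    calc Real.exp (β * ⟪x, ξ ν⟫) / Z ≤ Real.exp (β * maxOther) / Z :=
          div_le_div_of_nonneg_right h1 hZpos.le
      _ ≤ e := hratio
  have hM1 : (2 : ℝ) ≤ (M : ℝ) := by exact_mod_cast hM
  have honeminus : 1 - Real.exp (β * ⟪x, ξ μ⟫) / Z ≤ ((M : ℝ) - 1) * e := by
    have hsum : ∑ lam ∈ Finset.univ.erase μ, Real.exp (β * ⟪x, ξ lam⟫)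
        = Z - Real.exp (β * ⟪x, ξ μ⟫) := by
      rw [hZdef, ← Finset.sum_erase_add Finset.univ _ (Finset.mem_univ μ)]; ring
    have hb : ∑ lam ∈ Finset.univ.erase μ, Real.exp (β * ⟪x, ξ lam⟫)
        ≤ ((M : ℝ) - 1) * Real.exp (β * maxOther) := by
      calc ∑ lam ∈ Finset.univ.erase μ, Real.exp (β * ⟪x, ξ lam⟫)
          ≤ ∑ _lam ∈ Finset.univ.erase μ, Real.exp (β * maxOther) :=
            Finset.sum_le_sum (fun i hi => Real.exp_le_exp.2
              (mul_le_mul_of_nonneg_left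
                (hmax.2 ⟨i, Finset.ne_of_mem_erase hi, rfl⟩) hβ.le))
        _ = ((M : ℝ) - 1) * Real.exp (β * maxOther) := by
            rw [Finset.sum_const, Finset.card_erase_of_mem (Finset.mem_univ μ),
              Finset.card_univ, Fintype.card_fin, nsmul_eq_mul]
            have h1M : 1 ≤ M := le_trans one_le_two hM
            rw [Nat.cast_sub h1M]
            norm_num
    have heq : 1 - Real.exp (β * ⟪x, ξ μ⟫) / Z
        = (Z - Real.exp (β * ⟪x, ξ μ⟫)) / Z := by
      field_simp
    rw [heq, ← hsum]
    calc (∑ lam ∈ Finset.univ.erase μ, Real.exp (β * ⟪x, ξ lam⟫)) / Z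
        ≤ (((M : ℝ) - 1) * Real.exp (β * maxOther)) / Z :=
          div_le_div_of_nonneg_right hb hZpos.le
      _ = ((M : ℝ) - 1) * (Real.exp (β * maxOther) / Z) := by ring
      _ ≤ ((M : ℝ) - 1) * e :=
          mul_le_mul_of_nonneg_left hratio (by linarith)
  have hpμ_le : Real.exp (β * ⟪x, ξ μ⟫) / Z ≤ 1 := by
    rw [div_le_one hZpos]; exact hZgeμ
  -- split the sum
  have hsplit : (∑ ν ∈ 𝓜, (Real.exp (β * ⟪x, ξ ν⟫) / Z) • ξ ν) - ξ μ
      = (∑ ν ∈ 𝓜.erase μ, (Real.exp (β * ⟪x, ξ ν⟫) / Z) • ξ ν)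
        + ((Real.exp (β * ⟪x, ξ μ⟫) / Z) - 1) • ξ μ := by
    rw [← Finset.sum_erase_add 𝓜 _ hμ, sub_smul, one_smul]
    abel
  have hk1 : 1 ≤ k := by
    rw [← hk]; exact Finset.card_pos.2 ⟨μ, hμ⟩
  have hcard : (𝓜.erase μ).card = k - 1 := by
    rw [Finset.card_erase_of_mem hμ, hk]
  have hbound1 : ‖∑ ν ∈ 𝓜.erase μ, (Real.exp (β * ⟪x, ξ ν⟫) / Z) • ξ ν‖
      ≤ ((k : ℝ) - 1) * (e * m) := by
    calc ‖∑ ν ∈ 𝓜.erase μ, (Real.exp (β * ⟪x, ξ ν⟫) / Z) • ξ ν‖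
        ≤ ∑ ν ∈ 𝓜.erase μ, ‖(Real.exp (β * ⟪x, ξ ν⟫) / Z) • ξ ν‖ :=
          norm_sum_le _ _
      _ ≤ ∑ _ν ∈ 𝓜.erase μ, e * m := by
          apply Finset.sum_le_sum
          intro i hi
          rw [norm_smul, Real.norm_eq_abs,
            abs_of_nonneg (div_nonneg (Real.exp_pos _).le hZpos.le)]
          exact mul_le_mul (hp_other i (Finset.ne_of_mem_erase hi)) (hmν i)
            (norm_nonneg _) hepos.le
      _ = ((k : ℝ) - 1) * (e * m) := by
          rw [Finset.sum_const, hcard, nsmul_eq_mul, Nat.cast_sub hk1]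
          norm_num
  have hbound2 : ‖((Real.exp (β * ⟪x, ξ μ⟫) / Z) - 1) • ξ μ‖
      ≤ ((M : ℝ) - 1) * e * m := by
    rw [norm_smul, Real.norm_eq_abs, abs_of_nonpos (by linarith), neg_sub]
    calc (1 - Real.exp (β * ⟪x, ξ μ⟫) / Z) * ‖ξ μ‖
        ≤ (((M : ℝ) - 1) * e) * m := by
          exact mul_le_mul honeminus (hmν μ) (norm_nonneg _)
            (mul_nonneg (by linarith) hepos.le)
      _ = ((M : ℝ) - 1) * e * m := by ring
  have hk1R : (1 : ℝ) ≤ (k : ℝ) := by exact_mod_cast hk1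
  calc ‖(∑ ν ∈ 𝓜, (Real.exp (β * ⟪x, ξ ν⟫) / Z) • ξ ν) - ξ μ‖
      = ‖(∑ ν ∈ 𝓜.erase μ, (Real.exp (β * ⟪x, ξ ν⟫) / Z) • ξ ν)
        + ((Real.exp (β * ⟪x, ξ μ⟫) / Z) - 1) • ξ μ‖ := by rw [hsplit]
    _ ≤ ‖∑ ν ∈ 𝓜.erase μ, (Real.exp (β * ⟪x, ξ ν⟫) / Z) • ξ ν‖
        + ‖((Real.exp (β * ⟪x, ξ μ⟫) / Z) - 1) • ξ μ‖ := norm_add_le _ _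
    _ ≤ ((k : ℝ) - 1) * (e * m) + ((M : ℝ) - 1) * e * m := add_le_add hbound1 hbound2
    _ = m * ((M : ℝ) + (k : ℝ) - 2) * e := by ring
end

section
/- Let β > 0, M ≥ 2, and let ξ_1, …, ξ_M ∈ ℝ^d be memory patterns with m = max_{ν} ‖ξ_ν‖. Let 𝓜 ⊆ {1, …, M} be a support set of size k and let μ ∈ 𝓜. Then for every query x ∈ ℝ^d, the one-step retrieval error is exponentially suppressed by the separation Δ_μ: ‖T_Sparse(x) − ξ_μ‖ ≤ m (M + k − 2) exp(−β (Δ_μ − 2 m ‖x − ξ_μ‖)), where Δ_μ = min_{ν≠μ} (⟨ξ_μ, ξ_μ⟩ − ⟨ξ_μ, ξ_ν⟩). -/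
open scoped RealInnerProductSpace

/-- one-step retrieval with high accuracy — the retrieval error of the
sparse-structured dynamics is exponentially suppressed by the separation `Δ_μ`. -/
theorem sparse_one_step_retrieval
    {d M : ℕ} (hM : 2 ≤ M) (β : ℝ) (hβ : 0 < β)
    (ξ : Fin M → EuclideanSpace ℝ (Fin d))
    (m : ℝ) (hm : IsGreatest (Set.range fun ν => ‖ξ ν‖) m)
    (𝓜 : Finset (Fin M)) (k : ℕ) (hk : 𝓜.card = k)
    (μ : Fin M) (hμ : μ ∈ 𝓜)
    (Δ : ℝ)
    (hΔ : IsLeast {r : ℝ | ∃ ν : Fin M, ν ≠ μ ∧ r = ⟪ξ μ, ξ μ⟫ - ⟪ξ μ, ξ ν⟫} Δ) :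
    ∀ x : EuclideanSpace ℝ (Fin d),
      ‖(∑ ν ∈ 𝓜,
          (Real.exp (β * ⟪x, ξ ν⟫) / ∑ lam : Fin M, Real.exp (β * ⟪x, ξ lam⟫)) • ξ ν)
        - ξ μ‖
        ≤ m * ((M : ℝ) + (k : ℝ) - 2)
            * Real.exp (-β * (Δ - 2 * m * ‖x - ξ μ‖)) := by
  intro x
  set Z : ℝ := ∑ lam : Fin M, Real.exp (β * ⟪x, ξ lam⟫) with hZdef
  have hZpos : 0 < Z := Finset.sum_pos (fun i _ => Real.exp_pos _) ⟨μ, Finset.mem_univ μ⟩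
  set p : Fin M → ℝ := fun ν => Real.exp (β * ⟪x, ξ ν⟫) / Z with hpdef
  set E : ℝ := Real.exp (-β * (Δ - 2 * m * ‖x - ξ μ‖)) with hE
  have hEpos : 0 < E := Real.exp_pos _
  have hmν : ∀ ν, ‖ξ ν‖ ≤ m := fun ν => hm.2 ⟨ν, rfl⟩
  have hm0 : 0 ≤ m := le_trans (norm_nonneg _) (hmν μ)
  have hpnn : ∀ ν, 0 ≤ p ν := fun ν => div_nonneg (Real.exp_pos _).le hZpos.le
  have hnormsub : ∀ ν : Fin M, ‖ξ ν - ξ μ‖ ≤ 2 * m := by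
    intro ν
    calc ‖ξ ν - ξ μ‖ ≤ ‖ξ ν‖ + ‖ξ μ‖ := norm_sub_le _ _
      _ ≤ m + m := add_le_add (hmν ν) (hmν μ)
      _ = 2 * m := by ring
  -- key pointwise bound on the softmax weights
  have hp : ∀ ν : Fin M, ν ≠ μ → p ν ≤ E := by
    intro ν hν
    have hΔν : Δ ≤ ⟪ξ μ, ξ μ⟫ - ⟪ξ μ, ξ ν⟫ := hΔ.2 ⟨ν, hν, rfl⟩
    have hCS : ⟪x - ξ μ, ξ ν - ξ μ⟫ ≤ ‖x - ξ μ‖ * ‖ξ ν - ξ μ‖ := real_inner_le_norm _ _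
    have hCS2 : ⟪x - ξ μ, ξ ν - ξ μ⟫ ≤ ‖x - ξ μ‖ * (2 * m) :=
      hCS.trans (mul_le_mul_of_nonneg_left (hnormsub ν) (norm_nonneg _))
    have hid : ⟪x, ξ ν⟫ - ⟪x, ξ μ⟫
        = ⟪x - ξ μ, ξ ν - ξ μ⟫ + (⟪ξ μ, ξ ν⟫ - ⟪ξ μ, ξ μ⟫) := by
      simp only [inner_sub_left, inner_sub_right]
      ring
    have key : ⟪x, ξ ν⟫ - ⟪x, ξ μ⟫ ≤ 2 * m * ‖x - ξ μ‖ - Δ := by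
      rw [hid]; nlinarith [hCS2, hΔν]
    have h1 : Real.exp (β * ⟪x, ξ μ⟫) ≤ Z :=
      Finset.single_le_sum (f := fun lam => Real.exp (β * ⟪x, ξ lam⟫))
        (fun i _ => (Real.exp_pos _).le) (Finset.mem_univ μ)
    have h2 : p ν ≤ Real.exp (β * ⟪x, ξ ν⟫) / Real.exp (β * ⟪x, ξ μ⟫) := by
      apply div_le_div_of_nonneg_left (Real.exp_pos _).le (Real.exp_pos _) h1
    calc p ν ≤ Real.exp (β * ⟪x, ξ ν⟫) / Real.exp (β * ⟪x, ξ μ⟫) := h2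
      _ = Real.exp (β * ⟪x, ξ ν⟫ - β * ⟪x, ξ μ⟫) := (Real.exp_sub _ _).symm
      _ ≤ E := by
          rw [hE]
          apply Real.exp_le_exp.mpr
          have := mul_le_mul_of_nonneg_left key hβ.le
          nlinarith [this]
  -- softmax weights sum to one
  have hsum1 : ∑ ν : Fin M, p ν = 1 := by
    rw [hpdef]
    rw [← Finset.sum_div]
    exact div_self hZpos.ne'
  have hScompl : ∑ ν ∈ 𝓜ᶜ, p ν = 1 - ∑ ν ∈ 𝓜, p ν := by
    have := Finset.sum_add_sum_compl 𝓜 p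
    linarith [this, hsum1]
  -- decomposition
  have hdecomp : (∑ ν ∈ 𝓜, p ν • ξ ν) - ξ μ
      = (∑ ν ∈ 𝓜, p ν • (ξ ν - ξ μ)) - (1 - ∑ ν ∈ 𝓜, p ν) • ξ μ := by
    have h3 : ∑ ν ∈ 𝓜, p ν • (ξ ν - ξ μ)
        = (∑ ν ∈ 𝓜, p ν • ξ ν) - (∑ ν ∈ 𝓜, p ν) • ξ μ := by
      rw [Finset.sum_smul, ← Finset.sum_sub_distrib]
      exact Finset.sum_congr rfl fun ν _ => smul_sub _ _ _
    rw [h3, sub_smul, one_smul]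
    abel
  -- bound the first sum
  have hb1 : ‖∑ ν ∈ 𝓜, p ν • (ξ ν - ξ μ)‖ ≤ ((k : ℝ) - 1) * (E * (2 * m)) := by
    calc ‖∑ ν ∈ 𝓜, p ν • (ξ ν - ξ μ)‖ ≤ ∑ ν ∈ 𝓜, ‖p ν • (ξ ν - ξ μ)‖ :=
          norm_sum_le _ _
      _ = ∑ ν ∈ 𝓜, p ν * ‖ξ ν - ξ μ‖ := by
          refine Finset.sum_congr rfl fun ν _ => ?_
          rw [norm_smul, Real.norm_eq_abs, abs_of_nonneg (hpnn ν)]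
      _ = ∑ ν ∈ 𝓜.erase μ, p ν * ‖ξ ν - ξ μ‖ := by
          rw [← Finset.sum_erase_add 𝓜 _ hμ]
          simp
      _ ≤ ∑ ν ∈ 𝓜.erase μ, E * (2 * m) := by
          refine Finset.sum_le_sum fun ν hν => ?_
          have hνμ : ν ≠ μ := Finset.ne_of_mem_erase hν
          exact mul_le_mul (hp ν hνμ) (hnormsub ν) (norm_nonneg _) hEpos.le
      _ = ((𝓜.erase μ).card : ℝ) * (E * (2 * m)) := by
          rw [Finset.sum_const, nsmul_eq_mul]
      _ = ((k : ℝ) - 1) * (E * (2 * m)) := by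
          rw [Finset.card_erase_of_mem hμ, hk]
          have hk1 : 1 ≤ k := by
            rw [← hk]
            exact Finset.card_pos.mpr ⟨μ, hμ⟩
          rw [Nat.cast_sub hk1]
          norm_num
  -- bound the second term
  have hb2 : ‖(1 - ∑ ν ∈ 𝓜, p ν) • ξ μ‖ ≤ ((M : ℝ) - (k : ℝ)) * E * m := by
    have hkM : k ≤ M := by
      rw [← hk]
      simpa using Finset.card_le_card (Finset.subset_univ 𝓜)
    have h1S : 1 - ∑ ν ∈ 𝓜, p ν ≤ ((M : ℝ) - (k : ℝ)) * E := by
      rw [← hScompl]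
      calc ∑ ν ∈ 𝓜ᶜ, p ν ≤ ∑ ν ∈ 𝓜ᶜ, E := by
            refine Finset.sum_le_sum fun ν hν => ?_
            have : ν ≠ μ := fun h => (Finset.mem_compl.mp hν) (h ▸ hμ)
            exact hp ν this
        _ = ((𝓜ᶜ.card : ℝ)) * E := by rw [Finset.sum_const, nsmul_eq_mul]
        _ = ((M : ℝ) - (k : ℝ)) * E := by
            rw [Finset.card_compl, hk, Fintype.card_fin, Nat.cast_sub hkM]
    have h1S0 : 0 ≤ 1 - ∑ ν ∈ 𝓜, p ν := by
      rw [← hScompl]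
      exact Finset.sum_nonneg fun ν _ => hpnn ν
    rw [norm_smul, Real.norm_eq_abs, abs_of_nonneg h1S0]
    exact mul_le_mul h1S (hmν μ) (norm_nonneg _)
      (mul_nonneg (sub_nonneg.mpr (Nat.cast_le.mpr hkM)) hEpos.le)
  show ‖(∑ ν ∈ 𝓜, p ν • ξ ν) - ξ μ‖ ≤ m * ((M : ℝ) + (k : ℝ) - 2) * E
  calc ‖(∑ ν ∈ 𝓜, p ν • ξ ν) - ξ μ‖
      = ‖(∑ ν ∈ 𝓜, p ν • (ξ ν - ξ μ)) - (1 - ∑ ν ∈ 𝓜, p ν) • ξ μ‖ := by rw [hdecomp]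
    _ ≤ ‖∑ ν ∈ 𝓜, p ν • (ξ ν - ξ μ)‖ + ‖(1 - ∑ ν ∈ 𝓜, p ν) • ξ μ‖ := norm_sub_le _ _
    _ ≤ ((k : ℝ) - 1) * (E * (2 * m)) + ((M : ℝ) - (k : ℝ)) * E * m := add_le_add hb1 hb2
    _ = m * ((M : ℝ) + (k : ℝ) - 2) * E := by ring
end

section
/- Let β > 0, M ≥ 2, and let ξ_1, …, ξ_M ∈ ℝ^d be memory patterns with m = max_{ν} ‖ξ_ν‖ and m > 0. Let 𝓜 ⊆ {1, …, M} be a support set of size k, let μ ∈ 𝓜, let R > 0, and let S_μ = {x ∈ ℝ^d : ‖x − ξ_μ‖ ≤ R}. Suppose x ∈ S_μ and the well-separation condition holds: Δ_μ ≥ (1/β) ln((M + k − 2) m / R) + 2 m R, where Δ_μ = min_{ν≠μ} (⟨ξ_μ, ξ_μ⟩ − ⟨ξ_μ, ξ_ν⟩). Then T_Sparse(x) ∈ S_μ, i.e., ‖T_Sparse(x) − ξ_μ‖ ≤ R; in particular the retrieval dynamics T_Sparse maps S_μ into itself. -/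
open scoped RealInnerProductSpace

/-- well-separation condition — under the separation lower bound,
the sparse-structured retrieval dynamics maps the ball `S_μ` into itself. -/
theorem sparse_well_separation
    {d M : ℕ} (hM : 2 ≤ M) (β : ℝ) (hβ : 0 < β)
    (ξ : Fin M → EuclideanSpace ℝ (Fin d))
    (m : ℝ) (hm : IsGreatest (Set.range fun ν => ‖ξ ν‖) m) (hm0 : 0 < m)
    (𝓜 : Finset (Fin M)) (k : ℕ) (hk : 𝓜.card = k)
    (μ : Fin M) (hμ : μ ∈ 𝓜)
    (R : ℝ) (hR : 0 < R)
    (Δ : ℝ)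
    (hΔ : IsLeast {r : ℝ | ∃ ν : Fin M, ν ≠ μ ∧ r = ⟪ξ μ, ξ μ⟫ - ⟪ξ μ, ξ ν⟫} Δ)
    (hsep : Δ ≥ (1 / β) * Real.log (((M : ℝ) + (k : ℝ) - 2) * m / R) + 2 * m * R)
    (x : EuclideanSpace ℝ (Fin d)) (hx : ‖x - ξ μ‖ ≤ R) :
    ‖(∑ ν ∈ 𝓜,
        (Real.exp (β * ⟪x, ξ ν⟫) / ∑ lam : Fin M, Real.exp (β * ⟪x, ξ lam⟫)) • ξ ν)
      - ξ μ‖ ≤ R := by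
  set Z : ℝ := ∑ lam : Fin M, Real.exp (β * ⟪x, ξ lam⟫) with hZ
  have hZpos : 0 < Z :=
    Finset.sum_pos (fun i _ => Real.exp_pos _) ⟨μ, Finset.mem_univ μ⟩
  set p : Fin M → ℝ := fun ν => Real.exp (β * ⟪x, ξ ν⟫) / Z with hp
  have hppos : ∀ ν, 0 < p ν := fun ν => div_pos (Real.exp_pos _) hZpos
  have hpsum : ∑ ν : Fin M, p ν = 1 := by
    simp only [hp, ← Finset.sum_div]
    exact div_self hZpos.ne'
  have hmν : ∀ ν, ‖ξ ν‖ ≤ m := fun ν => hm.2 ⟨ν, rfl⟩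
  set E : ℝ := Real.exp (β * (2 * m * R - Δ)) with hE
  have hEpos : 0 < E := Real.exp_pos _
  -- each off-pattern weight is at most E
  have hpE : ∀ ν, ν ≠ μ → p ν ≤ E := by
    intro ν hν
    have h1 : Real.exp (β * ⟪x, ξ μ⟫) ≤ Z :=
      Finset.single_le_sum (f := fun lam => Real.exp (β * ⟪x, ξ lam⟫))
        (fun i _ => (Real.exp_pos _).le) (Finset.mem_univ μ)
    have h2 : p ν ≤ Real.exp (β * ⟪x, ξ ν⟫) / Real.exp (β * ⟪x, ξ μ⟫) := by
      show Real.exp (β * ⟪x, ξ ν⟫) / Z ≤ _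
      gcongr
    have h3 : ⟪x, ξ ν⟫ - ⟪x, ξ μ⟫
        = (⟪ξ μ, ξ ν⟫ - ⟪ξ μ, ξ μ⟫) + ⟪x - ξ μ, ξ ν - ξ μ⟫ := by
      simp [inner_sub_left, inner_sub_right, real_inner_comm x (ξ μ)]
      ring
    have hΔν : Δ ≤ ⟪ξ μ, ξ μ⟫ - ⟪ξ μ, ξ ν⟫ := hΔ.2 ⟨ν, hν, rfl⟩
    have hcross : ⟪x - ξ μ, ξ ν - ξ μ⟫ ≤ R * (2 * m) := by
      calc ⟪x - ξ μ, ξ ν - ξ μ⟫ ≤ ‖x - ξ μ‖ * ‖ξ ν - ξ μ‖ := real_inner_le_norm _ _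
        _ ≤ R * (2 * m) := by
            apply mul_le_mul hx ?_ (norm_nonneg _) hR.le
            calc ‖ξ ν - ξ μ‖ ≤ ‖ξ ν‖ + ‖ξ μ‖ := norm_sub_le _ _
              _ ≤ 2 * m := by linarith [hmν ν, hmν μ]
    have h4 : β * ⟪x, ξ ν⟫ - β * ⟪x, ξ μ⟫ ≤ β * (2 * m * R - Δ) := by
      have : ⟪x, ξ ν⟫ - ⟪x, ξ μ⟫ ≤ 2 * m * R - Δ := by
        rw [h3]; nlinarith
      nlinarith
    calc p ν ≤ Real.exp (β * ⟪x, ξ ν⟫) / Real.exp (β * ⟪x, ξ μ⟫) := h2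
      _ = Real.exp (β * ⟪x, ξ ν⟫ - β * ⟪x, ξ μ⟫) := (Real.exp_sub _ _).symm
      _ ≤ E := Real.exp_le_exp.mpr h4
  -- decomposition
  set s : ℝ := ∑ ν ∈ 𝓜, p ν with hs
  have hdecomp : (∑ ν ∈ 𝓜, p ν • ξ ν) - ξ μ
      = (∑ ν ∈ 𝓜, p ν • (ξ ν - ξ μ)) + (s - 1) • ξ μ := by
    have h1 : ∑ ν ∈ 𝓜, p ν • (ξ ν - ξ μ)
        = (∑ ν ∈ 𝓜, p ν • ξ ν) - s • ξ μ := by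
      simp [smul_sub, Finset.sum_sub_distrib, hs, Finset.sum_smul]
    rw [h1, sub_smul, one_smul]
    abel
  have hk1 : 1 ≤ k := by
    rw [← hk]; exact Finset.card_pos.mpr ⟨μ, hμ⟩
  have hkM : k ≤ M := by
    rw [← hk]
    simpa using Finset.card_le_card (Finset.subset_univ 𝓜)
  -- bound the in-support sum
  have hsum1 : ∑ ν ∈ 𝓜, p ν * ‖ξ ν - ξ μ‖ ≤ ((k : ℝ) - 1) * (E * (2 * m)) := by
    rw [← Finset.add_sum_erase 𝓜 _ hμ]
    have hterm : p μ * ‖ξ μ - ξ μ‖ = 0 := by simp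
    rw [hterm, zero_add]
    calc ∑ ν ∈ 𝓜.erase μ, p ν * ‖ξ ν - ξ μ‖
        ≤ ∑ ν ∈ 𝓜.erase μ, E * (2 * m) := by
          apply Finset.sum_le_sum
          intro ν hν
          have hνμ : ν ≠ μ := Finset.ne_of_mem_erase hν
          apply mul_le_mul (hpE ν hνμ) ?_ (norm_nonneg _) hEpos.le
          calc ‖ξ ν - ξ μ‖ ≤ ‖ξ ν‖ + ‖ξ μ‖ := norm_sub_le _ _
            _ ≤ 2 * m := by linarith [hmν ν, hmν μ]
      _ = ((k : ℝ) - 1) * (E * (2 * m)) := by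
          rw [Finset.sum_const, nsmul_eq_mul, Finset.card_erase_of_mem hμ, hk,
            Nat.cast_sub hk1, Nat.cast_one]
  -- bound the missing mass
  have hcompl : 1 - s = ∑ ν ∈ 𝓜ᶜ, p ν := by
    have := Finset.sum_add_sum_compl 𝓜 p
    rw [hpsum] at this
    linarith [this]
  have hsum2 : 1 - s ≤ ((M : ℝ) - (k : ℝ)) * E := by
    rw [hcompl]
    calc ∑ ν ∈ 𝓜ᶜ, p ν ≤ ∑ ν ∈ 𝓜ᶜ, E := by
          apply Finset.sum_le_sum
          intro ν hν
          exact hpE ν (fun h => (Finset.mem_compl.mp hν) (h ▸ hμ))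
      _ = ((M : ℝ) - (k : ℝ)) * E := by
          rw [Finset.sum_const, nsmul_eq_mul, Finset.card_compl, hk]
          simp [Nat.cast_sub hkM]
  have hs1 : s ≤ 1 := by
    have : 0 ≤ ∑ ν ∈ 𝓜ᶜ, p ν :=
      Finset.sum_nonneg fun ν _ => (hppos ν).le
    linarith [hcompl]
  -- norm bound
  have hnorm : ‖(∑ ν ∈ 𝓜, p ν • ξ ν) - ξ μ‖
      ≤ ((k : ℝ) - 1) * (E * (2 * m)) + ((M : ℝ) - (k : ℝ)) * E * m := by
    rw [hdecomp]
    calc ‖(∑ ν ∈ 𝓜, p ν • (ξ ν - ξ μ)) + (s - 1) • ξ μ‖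
        ≤ ‖∑ ν ∈ 𝓜, p ν • (ξ ν - ξ μ)‖ + ‖(s - 1) • ξ μ‖ := norm_add_le _ _
      _ ≤ (∑ ν ∈ 𝓜, p ν * ‖ξ ν - ξ μ‖) + (1 - s) * ‖ξ μ‖ := by
          gcongr
          · calc ‖∑ ν ∈ 𝓜, p ν • (ξ ν - ξ μ)‖ ≤ ∑ ν ∈ 𝓜, ‖p ν • (ξ ν - ξ μ)‖ :=
                norm_sum_le _ _
              _ = ∑ ν ∈ 𝓜, p ν * ‖ξ ν - ξ μ‖ := by
                  apply Finset.sum_congr rfl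
                  intro ν _
                  rw [norm_smul, Real.norm_eq_abs, abs_of_pos (hppos ν)]
          · rw [norm_smul, Real.norm_eq_abs, abs_of_nonpos (by linarith : s - 1 ≤ 0)]
            rw [neg_sub]
      _ ≤ ((k : ℝ) - 1) * (E * (2 * m)) + ((M : ℝ) - (k : ℝ)) * E * m := by
          gcongr
          · have hkM' : (k : ℝ) ≤ (M : ℝ) := by exact_mod_cast hkM
            exact mul_nonneg (by linarith) hEpos.le
          · exact hmν μ
  -- arithmetic conclusion
  have hC : (0 : ℝ) < (M : ℝ) + (k : ℝ) - 2 := by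
    have h1 : (2 : ℝ) ≤ (M : ℝ) := by exact_mod_cast hM
    have h2 : (1 : ℝ) ≤ (k : ℝ) := by exact_mod_cast hk1
    linarith
  have hCmR : (0 : ℝ) < ((M : ℝ) + (k : ℝ) - 2) * m / R := by positivity
  have hEle : E ≤ R / (((M : ℝ) + (k : ℝ) - 2) * m) := by
    have hlog : β * (2 * m * R - Δ) ≤ -Real.log (((M : ℝ) + (k : ℝ) - 2) * m / R) := by
      have h := hsep
      have : Real.log (((M : ℝ) + (k : ℝ) - 2) * m / R) + β * (2 * m * R) ≤ β * Δ := by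
        have := mul_le_mul_of_nonneg_left h hβ.le
        field_simp at this ⊢
        nlinarith
      nlinarith
    calc E ≤ Real.exp (-Real.log (((M : ℝ) + (k : ℝ) - 2) * m / R)) :=
        Real.exp_le_exp.mpr hlog
      _ = R / (((M : ℝ) + (k : ℝ) - 2) * m) := by
          rw [Real.exp_neg, Real.exp_log hCmR, inv_div]
  have hfinal : ((k : ℝ) - 1) * (E * (2 * m)) + ((M : ℝ) - (k : ℝ)) * E * m ≤ R := by
    have hk1' : (1 : ℝ) ≤ (k : ℝ) := by exact_mod_cast hk1
    have hkM' : (k : ℝ) ≤ (M : ℝ) := by exact_mod_cast hkM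
    have h1 : ((k : ℝ) - 1) * (E * (2 * m)) + ((M : ℝ) - (k : ℝ)) * E * m
        = ((M : ℝ) + (k : ℝ) - 2) * m * E := by ring
    rw [h1]
    calc ((M : ℝ) + (k : ℝ) - 2) * m * E
        ≤ ((M : ℝ) + (k : ℝ) - 2) * m * (R / (((M : ℝ) + (k : ℝ) - 2) * m)) := by
          exact mul_le_mul_of_nonneg_left hEle (mul_nonneg hC.le hm0.le)
      _ = R := by field_simp
  calc ‖(∑ ν ∈ 𝓜, p ν • ξ ν) - ξ μ‖
      ≤ ((k : ℝ) - 1) * (E * (2 * m)) + ((M : ℝ) - (k : ℝ)) * E * m := hnorm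
    _ ≤ R := hfinal
end

section
/- Let β > 0, M ≥ 2, and let ξ_1, …, ξ_M ∈ ℝ^d be memory patterns with m = max_{ν} ‖ξ_ν‖. Then for every query x ∈ ℝ^d and every μ ∈ {1, …, M}, the dense retrieval dynamics satisfies ‖T_Dense(x) − ξ_μ‖ ≤ 2 m (M − 1) exp(−β Δ̃_μ(x)), where Δ̃_μ(x) = ⟨x, ξ_μ⟩ − max_{ν≠μ} ⟨x, ξ_ν⟩. -/
open scoped RealInnerProductSpace

/-- retrieval error bound for the dense modern Hopfield dynamics:
`‖T_Dense(x) − ξ_μ‖ ≤ 2 m (M − 1) exp(−β Δ̃_μ(x))`. -/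
theorem dense_retrieval_error_bound
    {d M : ℕ} (hM : 2 ≤ M) (β : ℝ) (hβ : 0 < β)
    (ξ : Fin M → EuclideanSpace ℝ (Fin d))
    (m : ℝ) (hm : IsGreatest (Set.range fun ν => ‖ξ ν‖) m) :
    ∀ (x : EuclideanSpace ℝ (Fin d)) (μ : Fin M) (maxOther : ℝ),
      IsGreatest {r : ℝ | ∃ ν : Fin M, ν ≠ μ ∧ r = ⟪x, ξ ν⟫} maxOther →
      ‖(∑ ν : Fin M,
          (Real.exp (β * ⟪x, ξ ν⟫) / ∑ lam : Fin M, Real.exp (β * ⟪x, ξ lam⟫)) • ξ ν)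
        - ξ μ‖
        ≤ 2 * m * ((M : ℝ) - 1) * Real.exp (-β * (⟪x, ξ μ⟫ - maxOther)) := by
  intro x μ maxOther hmax
  set S : Fin M → ℝ := fun ν => ⟪x, ξ ν⟫ with hS
  set Z : ℝ := ∑ lam : Fin M, Real.exp (β * S lam) with hZ
  have hZpos : 0 < Z := Finset.sum_pos (fun i _ => Real.exp_pos _) ⟨μ, Finset.mem_univ μ⟩
  have hZge : Real.exp (β * S μ) ≤ Z :=
    Finset.single_le_sum (f := fun lam => Real.exp (β * S lam))
      (fun i _ => (Real.exp_pos _).le) (Finset.mem_univ μ)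
  have hm0 : 0 ≤ m := le_trans (norm_nonneg (ξ μ)) (hm.2 ⟨μ, rfl⟩)
  have hsum1 : ∑ ν : Fin M, Real.exp (β * S ν) / Z = 1 := by
    rw [← Finset.sum_div, ← hZ]
    field_simp
  have hrw : (∑ ν : Fin M, (Real.exp (β * S ν) / Z) • ξ ν) - ξ μ
      = ∑ ν : Fin M, (Real.exp (β * S ν) / Z) • (ξ ν - ξ μ) := by
    simp only [smul_sub, Finset.sum_sub_distrib, ← Finset.sum_smul, hsum1, one_smul]
  set E : ℝ := Real.exp (-β * (S μ - maxOther)) with hE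
  have key : ∀ ν : Fin M, ν ≠ μ →
      (Real.exp (β * S ν) / Z) * ‖ξ ν - ξ μ‖ ≤ 2 * m * E := by
    intro ν hν
    have hSν : S ν ≤ maxOther := hmax.2 ⟨ν, hν, rfl⟩
    have h1 : Real.exp (β * S ν) / Z ≤ Real.exp (β * S ν) / Real.exp (β * S μ) := by
      gcongr
    have h2 : Real.exp (β * S ν) / Real.exp (β * S μ) ≤ E := by
      rw [← Real.exp_sub, hE]
      apply Real.exp_le_exp.2
      nlinarith
    have h3 : ‖ξ ν - ξ μ‖ ≤ 2 * m := by
      calc ‖ξ ν - ξ μ‖ ≤ ‖ξ ν‖ + ‖ξ μ‖ := norm_sub_le _ _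
        _ ≤ m + m := add_le_add (hm.2 ⟨ν, rfl⟩) (hm.2 ⟨μ, rfl⟩)
        _ = 2 * m := by ring
    have hp0 : 0 ≤ Real.exp (β * S ν) / Z := div_nonneg (Real.exp_pos _).le hZpos.le
    calc (Real.exp (β * S ν) / Z) * ‖ξ ν - ξ μ‖ ≤ E * (2 * m) := by
          apply mul_le_mul (h1.trans h2) h3 (norm_nonneg _) (Real.exp_pos _).le
      _ = 2 * m * E := by ring
  rw [hrw]
  calc ‖∑ ν : Fin M, (Real.exp (β * S ν) / Z) • (ξ ν - ξ μ)‖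
      ≤ ∑ ν : Fin M, ‖(Real.exp (β * S ν) / Z) • (ξ ν - ξ μ)‖ := norm_sum_le _ _
    _ = ∑ ν : Fin M, (Real.exp (β * S ν) / Z) * ‖ξ ν - ξ μ‖ := by
        refine Finset.sum_congr rfl fun ν _ => ?_
        rw [norm_smul, Real.norm_eq_abs,
          abs_of_nonneg (div_nonneg (Real.exp_pos _).le hZpos.le)]
    _ = ∑ ν ∈ Finset.univ.erase μ, (Real.exp (β * S ν) / Z) * ‖ξ ν - ξ μ‖ := by
        rw [← Finset.sum_erase]
        simp
    _ ≤ ∑ ν ∈ Finset.univ.erase μ, 2 * m * E := by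
        refine Finset.sum_le_sum fun ν hν => key ν (Finset.ne_of_mem_erase hν)
    _ = ((M : ℝ) - 1) * (2 * m * E) := by
        rw [Finset.sum_const, nsmul_eq_mul, Finset.card_erase_of_mem (Finset.mem_univ μ),
          Finset.card_univ, Fintype.card_fin]
        have : ((M - 1 : ℕ) : ℝ) = (M : ℝ) - 1 := by
          have : 1 ≤ M := le_trans (by norm_num) hM
          push_cast [Nat.cast_sub this]
          ring
        rw [this]
    _ = 2 * m * ((M : ℝ) - 1) * E := by ring
end

section
/- Let γ denote the standard Gaussian measure on ℝ^d (the d-fold product of the standard normal distribution on ℝ). Then for all x, y ∈ ℝ^d, ∫ exp(⟨p, x⟩ − ‖x‖²/2) · exp(⟨p, y⟩ − ‖y‖²/2) dγ(p) = exp(⟨x, y⟩). In particular, the positive random feature ψ_u(p) = exp(⟨p, u⟩ − ‖u‖²/2) gives an unbiased estimator of the exponential kernel: E_{p∼γ}[ψ_x(p) ψ_y(p)] = exp(⟨x, y⟩). -/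
open scoped RealInnerProductSpace

open MeasureTheory

/-- The standard Gaussian measure on `ℝ^d`, the `d`-fold product of the standard normal
distribution, transported to `EuclideanSpace ℝ (Fin d)`. -/
noncomputable def stdGaussian (d : ℕ) : Measure (EuclideanSpace ℝ (Fin d)) :=
  (Measure.pi fun _ : Fin d => ProbabilityTheory.gaussianReal 0 1).map
    (WithLp.equiv 2 (Fin d → ℝ)).symm

open Real in
/-- The Gaussian integral with a linear term, real version. -/
lemma integral_rexp_quadratic' {b : ℝ} (hb : b < 0) (c : ℝ) :
    ∫ x : ℝ, Real.exp (b * x ^ 2 + c * x) = Real.sqrt (π / -b) * Real.exp (-(c ^ 2) / (4 * b)) := by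
  have hb' : (b : ℂ).re < 0 := by simpa using hb
  have h := integral_cexp_quadratic hb' (c : ℂ) 0
  have hint := integrable_cexp_quadratic' hb' (c : ℂ) 0
  have h3 : ((π : ℂ) / -(b : ℂ)) ^ (1 / 2 : ℂ) = ((Real.sqrt (π / -b) : ℝ) : ℂ) := by
    rw [show ((π : ℂ) / -(b : ℂ)) = ((π / -b : ℝ) : ℂ) by push_cast; ring,
      show (1 / 2 : ℂ) = ((1 / 2 : ℝ) : ℂ) by norm_num,
      ← Complex.ofReal_cpow (div_nonneg pi_pos.le (by linarith)),
      Real.rpow_def_of_pos (div_pos pi_pos (by linarith))]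
    rw [Real.sqrt_eq_rpow, Real.rpow_def_of_pos (div_pos pi_pos (by linarith))]
  have h4 : Complex.exp (0 - (c : ℂ) ^ 2 / (4 * (b : ℂ)))
      = ((Real.exp (-(c ^ 2) / (4 * b)) : ℝ) : ℂ) := by
    rw [Complex.ofReal_exp]
    push_cast
    ring_nf
  calc ∫ x : ℝ, Real.exp (b * x ^ 2 + c * x)
      = ∫ x : ℝ, (Complex.exp ((b : ℂ) * x ^ 2 + c * x + 0)).re := by
        congr 1; ext x
        rw [show ((b : ℂ) * x ^ 2 + c * x + 0) = ((b * x ^ 2 + c * x : ℝ) : ℂ) by push_cast; ring,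
          ← Complex.ofReal_exp, Complex.ofReal_re]
    _ = (∫ x : ℝ, Complex.exp ((b : ℂ) * x ^ 2 + c * x + 0)).re := by
        simpa using integral_re hint
    _ = _ := by rw [h, h3, h4, ← Complex.ofReal_mul, Complex.ofReal_re]

open Real in
/-- The moment generating function of the standard normal distribution. -/
lemma integral_exp_mul_stdNormal (c : ℝ) :
    ∫ t : ℝ, Real.exp (t * c) ∂(ProbabilityTheory.gaussianReal 0 1)
      = Real.exp (c ^ 2 / 2) := by
  rw [ProbabilityTheory.gaussianReal_of_var_ne_zero 0 one_ne_zero]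
  have hpdf : ProbabilityTheory.gaussianPDF 0 1
      = fun t => ((Real.toNNReal (ProbabilityTheory.gaussianPDFReal 0 1 t)) : ENNReal) := rfl
  rw [hpdf, integral_withDensity_eq_integral_smul
    ((ProbabilityTheory.measurable_gaussianPDFReal 0 1).real_toNNReal)]
  have heq : ∀ t : ℝ,
      (Real.toNNReal (ProbabilityTheory.gaussianPDFReal 0 1 t)) • Real.exp (t * c)
        = (Real.sqrt (2 * π))⁻¹ * Real.exp (-(1 / 2) * t ^ 2 + c * t) := by
    intro t
    rw [NNReal.smul_def, Real.coe_toNNReal _ (ProbabilityTheory.gaussianPDFReal_nonneg 0 1 t),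
      ProbabilityTheory.gaussianPDFReal]
    simp only [NNReal.coe_one, mul_one, sub_zero]
    rw [smul_eq_mul, mul_assoc, ← Real.exp_add]
    congr 2
    ring
  simp_rw [heq]
  rw [integral_const_mul, integral_rexp_quadratic' (by norm_num : -(1 / 2 : ℝ) < 0) c]
  have h1 : π / -(-(1 / 2 : ℝ)) = 2 * π := by ring
  have h2 : -(c ^ 2) / (4 * -(1 / 2 : ℝ)) = c ^ 2 / 2 := by ring
  rw [h1, h2, ← mul_assoc, inv_mul_cancel₀ (by positivity : Real.sqrt (2 * π) ≠ 0), one_mul]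

/-- The moment generating function of the standard Gaussian on `ℝ^d`. -/
lemma integral_exp_inner {d : ℕ} (z : EuclideanSpace ℝ (Fin d)) :
    ∫ p, Real.exp ⟪p, z⟫ ∂(stdGaussian d) = Real.exp (‖z‖ ^ 2 / 2) := by
  letI : MeasureSpace ℝ := ⟨ProbabilityTheory.gaussianReal 0 1⟩
  haveI : SigmaFinite (volume : Measure ℝ) :=
    inferInstanceAs (SigmaFinite (ProbabilityTheory.gaussianReal 0 1))
  have hmap : stdGaussian d
      = Measure.map (MeasurableEquiv.toLp 2 (Fin d → ℝ))
          (Measure.pi fun _ : Fin d => ProbabilityTheory.gaussianReal 0 1) := rfl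
  rw [hmap, integral_map_equiv]
  have hinner : ∀ p : Fin d → ℝ,
      ⟪(MeasurableEquiv.toLp 2 (Fin d → ℝ)) p, z⟫ = ∑ i, p i * z i := by
    intro p
    simp [PiLp.inner_apply, RCLike.inner_apply, MeasurableEquiv.coe_toLp,
      mul_comm]
  simp_rw [hinner, Real.exp_sum]
  have := MeasureTheory.integral_fintype_prod_eq_prod (𝕜 := ℝ) (ι := Fin d)
    (f := fun i (t : ℝ) => Real.exp (t * z i)) (μ := fun _ => volume)
  rw [show (Measure.pi fun _ : Fin d => ProbabilityTheory.gaussianReal 0 1)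
      = (volume : Measure (Fin d → ℝ)) from rfl]
  erw [this]
  have hone : ∀ i, ∫ t : ℝ, Real.exp (t * z i) = Real.exp ((z i) ^ 2 / 2) := fun i =>
    integral_exp_mul_stdNormal (z i)
  simp_rw [hone, ← Real.exp_sum]
  congr 1
  rw [EuclideanSpace.norm_eq, Real.sq_sqrt (by positivity)]
  rw [Finset.sum_div]
  congr 1
  ext i
  rw [Real.norm_eq_abs, sq_abs]

/-- the positive random feature identity — the PRF
`ψ_u(p) = exp(⟨p, u⟩ − ‖u‖²/2)` gives an unbiased estimator of the exponential kernel: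
`E_{p∼γ}[ψ_x(p) ψ_y(p)] = exp(⟨x, y⟩)`. -/
theorem positive_random_feature_identity
    {d : ℕ} (x y : EuclideanSpace ℝ (Fin d)) :
    ∫ p, Real.exp (⟪p, x⟫ - ‖x‖ ^ 2 / 2) * Real.exp (⟪p, y⟫ - ‖y‖ ^ 2 / 2)
        ∂(stdGaussian d)
      = Real.exp ⟪x, y⟫ := by
  have key : ∀ p : EuclideanSpace ℝ (Fin d),
      Real.exp (⟪p, x⟫ - ‖x‖ ^ 2 / 2) * Real.exp (⟪p, y⟫ - ‖y‖ ^ 2 / 2)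
        = Real.exp ⟪p, x + y⟫ * Real.exp (-(‖x‖ ^ 2 / 2) - ‖y‖ ^ 2 / 2) := by
    intro p
    rw [← Real.exp_add, ← Real.exp_add, inner_add_right]
    ring_nf
  simp_rw [key]
  rw [integral_mul_const, integral_exp_inner, ← Real.exp_add]
  congr 1
  have h := norm_add_sq_real x y
  linarith [h]
end
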